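/- A real number x is a (-β)-integer if and only if x = Σ_{k=0}^{n-1} d_k (-β)^k for some n ≥ 0 and integers d_0, …, d_{n-1} satisfying -β/(β+1) ≤ Σ_{k=0}^{m-1} d_k (-β)^{k-m} < 1/(β+1) for all 1 ≤ m ≤ n. -/

import Mathlib

/-- The `(-β)`-transformation `x ↦ -βx - ⌊β/(β+1) - βx⌋`. -/
noncomputable def Tm (β : ℝ) (x : ℝ) : ℝ := -β * x - ⌊β / (β + 1) - β * x⌋

/-- The set of `(-β)`-integers `Z_{-β} = ⋃_{n≥0} (-β)^n T_{-β}^{-n}(0)`. -/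
noncomputable def Zm (β : ℝ) : Set ℝ :=
  {x | ∃ n : ℕ, x / (-β) ^ n ∈ Set.Ico (-β / (β + 1)) (1 / (β + 1)) ∧
    (Tm β)^[n] (x / (-β) ^ n) = 0}

lemma interval_len (β : ℝ) (hβ : 1 < β) : 1 / (β + 1) = -β / (β + 1) + 1 := by
  have h1 : β + 1 ≠ 0 := by linarith
  field_simp
  ring

lemma Tm_mem (β : ℝ) (hβ : 1 < β) (y : ℝ) :
    Tm β y ∈ Set.Ico (-β / (β + 1)) (1 / (β + 1)) := by
  have h1 : (β : ℝ) + 1 > 0 := by linarith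
  have hfl := Int.floor_le (β / (β + 1) - β * y)
  have hfu := Int.lt_floor_add_one (β / (β + 1) - β * y)
  have hlen := interval_len β hβ
  have hsum : β / (β + 1) + (-β) / (β + 1) = 0 := by field_simp; ring
  constructor
  · unfold Tm; nlinarith
  · unfold Tm; nlinarith

lemma Tm_eq (β : ℝ) (hβ : 1 < β) {y s : ℝ} {d : ℤ}
    (hy : y ∈ Set.Ico (-β / (β + 1)) (1 / (β + 1))) (h : y = -β * s - d) :
    Tm β s = y := by
  have hlen := interval_len β hβ
  have hsum : β / (β + 1) + (-β) / (β + 1) = 0 := by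
    have h1 : (β : ℝ) + 1 ≠ 0 := by linarith
    field_simp
    ring
  have hfloor : ⌊β / (β + 1) - β * s⌋ = d := by
    rw [Int.floor_eq_iff]
    constructor
    · have := hy.1; nlinarith [hy.1]
    · have := hy.2; push_cast; nlinarith [hy.2]
  unfold Tm
  rw [hfloor]
  linarith [h]

lemma S_rec (β : ℝ) (hβ : 1 < β) (d : ℕ → ℤ) (m : ℕ) :
    (-β) * ∑ k ∈ Finset.range (m + 1), (d k : ℝ) * (-β) ^ ((k : ℤ) - (m + 1)) =
      (∑ k ∈ Finset.range m, (d k : ℝ) * (-β) ^ ((k : ℤ) - m)) + d m := by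
  have hne : (-β : ℝ) ≠ 0 := by intro h; nlinarith [neg_eq_zero.mp h]
  have hterm : ∀ k : ℕ, (-β) * ((-β) ^ ((k : ℤ) - (m + 1))) = (-β) ^ ((k : ℤ) - m) := by
    intro k
    have : ((k : ℤ) - (m + 1)) + 1 = (k : ℤ) - m := by push_cast; ring
    rw [← this, zpow_add_one₀ hne, mul_comm]
  rw [Finset.mul_sum, Finset.sum_range_succ]
  have hlast : (-β) * ((d m : ℝ) * (-β) ^ ((m : ℤ) - (m + 1))) = (d m : ℝ) := by
    rw [mul_left_comm, hterm m, sub_self, zpow_zero, mul_one]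
  calc ∑ k ∈ Finset.range m, (-β) * ((d k : ℝ) * (-β) ^ ((k : ℤ) - (m + 1)))
        + (-β) * ((d m : ℝ) * (-β) ^ ((m : ℤ) - (m + 1)))
      = ∑ k ∈ Finset.range m, (d k : ℝ) * (-β) ^ ((k : ℤ) - m) + (d m : ℝ) := by
        rw [hlast]
        congr 1
        refine Finset.sum_congr rfl fun k _ => ?_
        rw [mul_left_comm, hterm k]

lemma pow_sum (β : ℝ) (hβ : 1 < β) (d : ℕ → ℤ) (n : ℕ) :
    (-β) ^ n * ∑ k ∈ Finset.range n, (d k : ℝ) * (-β) ^ ((k : ℤ) - n) =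
      ∑ k ∈ Finset.range n, (d k : ℝ) * (-β) ^ k := by
  have hne : (-β : ℝ) ≠ 0 := by intro h; nlinarith [neg_eq_zero.mp h]
  rw [Finset.mul_sum]
  refine Finset.sum_congr rfl fun k _ => ?_
  rw [mul_left_comm]
  congr 1
  have : ((-β) ^ k : ℝ) = (-β) ^ (k : ℤ) := by rw [zpow_natCast]
  rw [this, ← zpow_natCast (-β) n, ← zpow_add₀ hne]
  congr 1
  ring

theorem stmt_9 (β : ℝ) (hβ : 1 < β) (x : ℝ) :
    x ∈ Zm β ↔ ∃ (n : ℕ) (d : ℕ → ℤ),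
      x = ∑ k ∈ Finset.range n, (d k : ℝ) * (-β) ^ k ∧
      ∀ m, 1 ≤ m → m ≤ n →
        -β / (β + 1) ≤ ∑ k ∈ Finset.range m, (d k : ℝ) * (-β) ^ ((k : ℤ) - m) ∧
        ∑ k ∈ Finset.range m, (d k : ℝ) * (-β) ^ ((k : ℤ) - m) < 1 / (β + 1) := by
  have h1 : (β : ℝ) + 1 > 0 := by linarith
  have hβ0 : (β : ℝ) ≠ 0 := by linarith
  have hne : (-β : ℝ) ≠ 0 := neg_ne_zero.mpr hβ0
  have hpne : ∀ n : ℕ, ((-β : ℝ)) ^ n ≠ 0 := fun n => pow_ne_zero n hne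
  have hzero_mem : (0 : ℝ) ∈ Set.Ico (-β / (β + 1)) (1 / (β + 1)) := by
    constructor
    · apply div_nonpos_of_nonpos_of_nonneg <;> linarith
    · positivity
  constructor
  · rintro ⟨n, hmem, hiter⟩
    set y : ℕ → ℝ := fun j => (Tm β)^[j] (x / (-β) ^ n) with hy
    have hy0 : y 0 = x / (-β) ^ n := rfl
    have hystep : ∀ j, y (j + 1) = Tm β (y j) := by
      intro j
      simp only [hy, Function.iterate_succ_apply']
    set e : ℕ → ℤ := fun j => ⌊β / (β + 1) - β * y j⌋ with he
    have hyrec : ∀ j, y (j + 1) = -β * y j - e j := by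
      intro j; rw [hystep j]; rfl
    have hyIco : ∀ j, y j ∈ Set.Ico (-β / (β + 1)) (1 / (β + 1)) := by
      intro j
      cases j with
      | zero => exact hmem
      | succ j => rw [hystep j]; exact Tm_mem β hβ (y j)
    set d : ℕ → ℤ := fun k => e (n - 1 - k) with hd
    have hS : ∀ m, m ≤ n →
        (∑ k ∈ Finset.range m, (d k : ℝ) * (-β) ^ ((k : ℤ) - m)) = y (n - m) := by
      intro m
      induction m with
      | zero =>
        intro _
        simp only [Finset.range_zero, Finset.sum_empty, Nat.sub_zero]
        simp only [hy]
        exact hiter.symm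
      | succ m ih =>
        intro hmn
        have hm : m ≤ n := by omega
        have hrec := S_rec β hβ d m
        rw [ih hm] at hrec
        have hidx : n - 1 - m = n - (m + 1) := by omega
        have hidx2 : n - m = (n - (m + 1)) + 1 := by omega
        have heq : y (n - m) = -β * y (n - (m + 1)) - e (n - (m + 1)) := by
          rw [hidx2]; exact hyrec (n - (m + 1))
        have hdm : (d m : ℝ) = (e (n - (m + 1)) : ℝ) := by
          simp only [hd, hidx]
        rw [heq, hdm] at hrec
        have : (-β) * (∑ k ∈ Finset.range (m + 1), (d k : ℝ) * (-β) ^ ((k : ℤ) - (m + 1)))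
            = (-β) * y (n - (m + 1)) := by linarith
        exact mul_left_cancel₀ hne this
    refine ⟨n, d, ?_, ?_⟩
    · have hSn := hS n le_rfl
      rw [Nat.sub_self] at hSn
      have : x = (-β) ^ n * (∑ k ∈ Finset.range n, (d k : ℝ) * (-β) ^ ((k : ℤ) - n)) := by
        rw [hSn, hy0]
        field_simp
      rw [this, pow_sum β hβ d n]
    · intro m hm1 hmn
      rw [hS m hmn]
      exact ⟨(hyIco (n - m)).1, (hyIco (n - m)).2⟩
  · rintro ⟨n, d, hxeq, hbound⟩
    set S : ℕ → ℝ := fun m => ∑ k ∈ Finset.range m, (d k : ℝ) * (-β) ^ ((k : ℤ) - m) with hSdef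
    have hS0 : S 0 = 0 := by simp [hSdef]
    have hSIco : ∀ m, m ≤ n → S m ∈ Set.Ico (-β / (β + 1)) (1 / (β + 1)) := by
      intro m hmn
      cases Nat.eq_zero_or_pos m with
      | inl h => rw [h, hS0]; exact hzero_mem
      | inr h => exact ⟨(hbound m h hmn).1, (hbound m h hmn).2⟩
    have hTmS : ∀ m, m < n → Tm β (S (m + 1)) = S m := by
      intro m hmn
      have hrec := S_rec β hβ d m
      have hrec' : S m = -β * S (m + 1) - (d m : ℝ) := by
        simp only [hSdef]
        push_cast
        push_cast at hrec
        linarith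
      exact Tm_eq β hβ (hSIco m (le_of_lt hmn)) hrec'
    have hiter : ∀ m, m ≤ n → (Tm β)^[m] (S m) = 0 := by
      intro m
      induction m with
      | zero => intro _; simpa using hS0
      | succ m ih =>
        intro hmn
        rw [Function.iterate_succ_apply, hTmS m (by omega)]
        exact ih (by omega)
    have hdiv : x / (-β) ^ n = S n := by
      rw [hxeq, ← pow_sum β hβ d n]
      field_simp [hSdef]
      rfl
    exact ⟨n, by rw [hdiv]; exact hSIco n le_rfl, by rw [hdiv]; exact hiter n le_rfl⟩
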